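/- Let (M, φ, g) be a para-Kähler-Norden manifold and Γ = (γ(t), ξ(t)) a curve on T₁^φM. Then: (1) Φ = (γ(t), φξ(t)) is also a curve on T₁^φM; (2) Φ is a geodesic of T₁^φM with the φ-Sasaki metric if and only if Γ is. -/
import Mathlib


/-- If Γ = (γ, ξ) is a curve on T₁^φM of a para-Kähler-Norden
manifold, then (1) Φ = (γ, φξ) is also a curve on T₁^φM, and (2) Φ is a
geodesic of (T₁^φM, φ-Sasaki metric) if and only if Γ is; geodesics being
characterized by γ'' = R(ξ', φξ)γ' and ξ'' = −g(ξ', φξ')ξ. -/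
theorem phi_image_curve_geodesic_iff
    {V : Type*} [AddCommGroup V] [Module ℝ V]
    (g : V →ₗ[ℝ] V →ₗ[ℝ] ℝ) (hgsym : ∀ X Y, g X Y = g Y X)
    (φ : V →ₗ[ℝ] V) (hφ2 : ∀ X, φ (φ X) = X)
    (hpure : ∀ X Y, g (φ X) Y = g X (φ Y))
    (R : V → V → V → V)
    (hRpure : ∀ X Y Z, R (φ X) Y Z = R X (φ Y) Z)   -- purity of curvature
    (D : (ℝ → V) → (ℝ → V))
    (hDφ : ∀ X : ℝ → V, D (fun s => φ (X s)) = fun s => φ (D X s))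
    (γ' ξ : ℝ → V)
    (hunit : ∀ t, g (ξ t) (φ (ξ t)) = 1) :
    (∀ t, g (φ (ξ t)) (φ (φ (ξ t))) = 1) ∧
    ((∀ t, D γ' t = R (D (fun s => φ (ξ s)) t) (φ (φ (ξ t))) (γ' t) ∧
          D (D (fun s => φ (ξ s))) t =
            -(g (D (fun s => φ (ξ s)) t) (φ (D (fun s => φ (ξ s)) t)))
              • φ (ξ t)) ↔
     (∀ t, D γ' t = R (D ξ t) (φ (ξ t)) (γ' t) ∧
          D (D ξ) t = -(g (D ξ t) (φ (D ξ t))) • ξ t)) := by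
  have hφinj : Function.Injective φ := fun a b h => by
    have := congrArg φ h; rwa [hφ2, hφ2] at this
  have hDφξ : D (fun s => φ (ξ s)) = fun s => φ (D ξ s) := hDφ ξ
  have hDDφξ : D (D (fun s => φ (ξ s))) = fun s => φ (D (D ξ) s) := by
    rw [hDφξ]; exact hDφ (D ξ)
  constructor
  · intro t
    rw [hφ2, hpure]; exact hunit t
  · have key : ∀ t,
        (D γ' t = R (D (fun s => φ (ξ s)) t) (φ (φ (ξ t))) (γ' t) ∧
          D (D (fun s => φ (ξ s))) t =
            -(g (D (fun s => φ (ξ s)) t) (φ (D (fun s => φ (ξ s)) t)))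
              • φ (ξ t)) ↔
        (D γ' t = R (D ξ t) (φ (ξ t)) (γ' t) ∧
          D (D ξ) t = -(g (D ξ t) (φ (D ξ t))) • ξ t) := by
      intro t
      have h1 : R (D (fun s => φ (ξ s)) t) (φ (φ (ξ t))) (γ' t)
          = R (D ξ t) (φ (ξ t)) (γ' t) := by
        rw [hDφξ]; simp only [hφ2]
        rw [hRpure]
      have hc : g (D (fun s => φ (ξ s)) t) (φ (D (fun s => φ (ξ s)) t))
          = g (D ξ t) (φ (D ξ t)) := by
        rw [hDφξ]; simp only
        rw [hpure, hφ2, hgsym]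
      have h2 : (D (D (fun s => φ (ξ s))) t =
            -(g (D (fun s => φ (ξ s)) t) (φ (D (fun s => φ (ξ s)) t)))
              • φ (ξ t)) ↔
          (D (D ξ) t = -(g (D ξ t) (φ (D ξ t))) • ξ t) := by
        rw [hDDφξ, hc]; simp only
        constructor
        · intro h
          apply hφinj
          rw [h, map_smul]
        · intro h
          rw [h, map_smul]
      rw [h1, h2]
    exact forall_congr' key
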